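/- For every path set 𝒥 of jobs with singleton possessions, there exists an optimal solution X contained in 𝒫* (the union over jobs j of the sets ℛ*_j consisting of the last up-path and last down-path of ℛ_j). -/

import Mathlib

open Finset
open scoped Classical

/-- Paths are pairs (direction, index). -/
abbrev BPath := Bool × ℤ

/-- `ℛ*_j`: the paths of maximal index of each direction present in `ℛ j`
(the last up-path and the last down-path of `ℛ j`). -/
noncomputable def Rstar {ι : Type*} (ℛ : ι → Finset BPath) (j : ι) : Finset BPath :=
  (ℛ j).filter fun q => ∀ q' ∈ ℛ j, q'.1 = q.1 → q'.2 ≤ q.2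

/-- The maximal index of direction `d` present in `ℛ j` (junk `0` if none). -/
noncomputable def topIdx {ι : Type*} (ℛ : ι → Finset BPath) (j : ι) (d : Bool) : ℤ :=
  WithBot.unbotD 0 ((((ℛ j).filter fun q => q.1 = d)).image Prod.snd).max

lemma topIdx_eq_max' {ι : Type*} {ℛ : ι → Finset BPath} {j : ι} {d : Bool}
    (hne : ((((ℛ j).filter fun (q : BPath) => q.1 = d)).image Prod.snd).Nonempty) :
    topIdx ℛ j d = ((((ℛ j).filter fun (q : BPath) => q.1 = d)).image Prod.snd).max' hne := by
  unfold topIdx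
  rw [← Finset.coe_max' hne]
  exact WithBot.unbotD_coe _ _

lemma topIdx_mem {ι : Type*} {ℛ : ι → Finset BPath} {j : ι} {d : Bool} {i : ℤ}
    (h : (d, i) ∈ ℛ j) : (d, topIdx ℛ j d) ∈ ℛ j := by
  have hne : ((((ℛ j).filter fun q => q.1 = d)).image Prod.snd).Nonempty :=
    ⟨i, mem_image.2 ⟨(d, i), mem_filter.2 ⟨h, rfl⟩, rfl⟩⟩
  rw [topIdx_eq_max' hne]
  have := Finset.max'_mem _ hne
  obtain ⟨q, hq, hq2⟩ := mem_image.1 this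
  obtain ⟨hq1, hqd⟩ := mem_filter.1 hq
  rw [← hq2, ← hqd]
  simpa using hq1

lemma topIdx_le {ι : Type*} {ℛ : ι → Finset BPath} {j : ι} {d : Bool} {q : BPath}
    (h : q ∈ ℛ j) (hd : q.1 = d) : q.2 ≤ topIdx ℛ j d := by
  have hne : ((((ℛ j).filter fun q => q.1 = d)).image Prod.snd).Nonempty :=
    ⟨q.2, mem_image.2 ⟨q, mem_filter.2 ⟨h, hd⟩, rfl⟩⟩
  rw [topIdx_eq_max' hne]
  exact Finset.le_max' _ _ (mem_image.2 ⟨q, mem_filter.2 ⟨h, hd⟩, rfl⟩)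

/-- Shift a path to the minimum, over the jobs it covers, of the maximal index
of its direction in that job's possession set. -/
noncomputable def shift {ι : Type*} [Fintype ι] (ℛ : ι → Finset BPath) (p : BPath) : BPath :=
  if h : (Finset.univ.filter fun j => p ∈ ℛ j).Nonempty then
    (p.1, ((Finset.univ.filter fun j => p ∈ ℛ j).image fun j => topIdx ℛ j p.1).min' (h.image _))
  else p

lemma shift_mem {ι : Type*} [Fintype ι] {ℛ : ι → Finset BPath} {p : BPath} {j : ι}
    (hint : ∀ (j : ι) (dir : Bool) (i₁ i₂ i₃ : ℤ), i₁ ≤ i₂ → i₂ ≤ i₃ →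
      (dir, i₁) ∈ ℛ j → (dir, i₃) ∈ ℛ j → (dir, i₂) ∈ ℛ j)
    (hp : p ∈ ℛ j) : shift ℛ p ∈ ℛ j := by
  have h : (Finset.univ.filter fun j => p ∈ ℛ j).Nonempty :=
    ⟨j, mem_filter.2 ⟨mem_univ _, hp⟩⟩
  rw [shift, dif_pos h]
  set i' := ((Finset.univ.filter fun j => p ∈ ℛ j).image fun j => topIdx ℛ j p.1).min' (h.image _) with hi'
  have hp' : (p.1, p.2) ∈ ℛ j := by simpa using hp
  have h1 : p.2 ≤ i' := by
    apply Finset.le_min'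
    intro y hy
    obtain ⟨j', hj', rfl⟩ := mem_image.1 hy
    exact topIdx_le (mem_filter.1 hj').2 rfl
  have h2 : i' ≤ topIdx ℛ j p.1 :=
    Finset.min'_le _ _ (mem_image.2 ⟨j, mem_filter.2 ⟨mem_univ _, hp⟩, rfl⟩)
  exact hint j p.1 p.2 i' (topIdx ℛ j p.1) h1 h2 hp' (topIdx_mem hp')

lemma shift_mem_Pstar {ι : Type*} [Fintype ι] {ℛ : ι → Finset BPath} {p : BPath} {j : ι}
    (hint : ∀ (j : ι) (dir : Bool) (i₁ i₂ i₃ : ℤ), i₁ ≤ i₂ → i₂ ≤ i₃ →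
      (dir, i₁) ∈ ℛ j → (dir, i₃) ∈ ℛ j → (dir, i₂) ∈ ℛ j)
    (hp : p ∈ ℛ j) : shift ℛ p ∈ Finset.univ.biUnion (Rstar ℛ) := by
  have h : (Finset.univ.filter fun j => p ∈ ℛ j).Nonempty :=
    ⟨j, mem_filter.2 ⟨mem_univ _, hp⟩⟩
  have hmin := Finset.min'_mem _ (h.image fun j => topIdx ℛ j p.1)
  obtain ⟨j₀, hj₀, hj₀eq⟩ := mem_image.1 hmin
  have hpj₀ : p ∈ ℛ j₀ := (mem_filter.1 hj₀).2
  refine mem_biUnion.2 ⟨j₀, mem_univ _, ?_⟩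
  have hsm : shift ℛ p ∈ ℛ j₀ := shift_mem hint hpj₀
  refine mem_filter.2 ⟨hsm, ?_⟩
  intro q' hq' hd
  have hfst : (shift ℛ p).1 = p.1 := by rw [shift, dif_pos h]
  have hsnd : (shift ℛ p).2 = topIdx ℛ j₀ p.1 := by rw [shift, dif_pos h]; exact hj₀eq.symm
  rw [hsnd]
  exact topIdx_le hq' (hd.trans hfst)

/-- Lemma (`lem:interesting_paths`): in the singleton-possession setting, there exists an
optimal solution contained in `𝒫* = ⋃_j ℛ*_j`. Here a solution is `X` with
`X ∩ ℛ j ≠ ∅` for every job `j`, and the index sets of each direction in each `ℛ j`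
are intervals of consecutive integers. -/
theorem optimal_solution_in_Pstar {ι : Type*} [Fintype ι]
    (ℛ : ι → Finset BPath) (hR : ∀ j, (ℛ j).Nonempty)
    (hint : ∀ (j : ι) (dir : Bool) (i₁ i₂ i₃ : ℤ), i₁ ≤ i₂ → i₂ ≤ i₃ →
      (dir, i₁) ∈ ℛ j → (dir, i₃) ∈ ℛ j → (dir, i₂) ∈ ℛ j) :
    ∃ X : Finset BPath,
      (∀ j, (X ∩ ℛ j).Nonempty) ∧
      (∀ Y : Finset BPath, (∀ j, (Y ∩ ℛ j).Nonempty) → X.card ≤ Y.card) ∧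
      X ⊆ Finset.univ.biUnion (Rstar ℛ) := by
  have hP : ∃ n : ℕ, ∃ Y : Finset BPath, (∀ j, (Y ∩ ℛ j).Nonempty) ∧ Y.card = n := by
    refine ⟨_, Finset.univ.biUnion ℛ, fun j => ?_, rfl⟩
    obtain ⟨p, hp⟩ := hR j
    exact ⟨p, mem_inter.2 ⟨mem_biUnion.2 ⟨j, mem_univ _, hp⟩, hp⟩⟩
  obtain ⟨Y, hYfeas, hYcard⟩ := Nat.find_spec hP
  refine ⟨(Y.filter fun p => ∃ j, p ∈ ℛ j).image (shift ℛ), ?_, ?_, ?_⟩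
  · intro j
    obtain ⟨p, hp⟩ := hYfeas j
    have hpY := (mem_inter.1 hp).1
    have hpR := (mem_inter.1 hp).2
    exact ⟨shift ℛ p, mem_inter.2 ⟨mem_image.2 ⟨p, mem_filter.2 ⟨hpY, j, hpR⟩, rfl⟩,
      shift_mem hint hpR⟩⟩
  · intro Y' hY'
    calc ((Y.filter fun p => ∃ j, p ∈ ℛ j).image (shift ℛ)).card
        ≤ (Y.filter fun p => ∃ j, p ∈ ℛ j).card := Finset.card_image_le
      _ ≤ Y.card := Finset.card_filter_le _ _
      _ = Nat.find hP := hYcard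
      _ ≤ Y'.card := Nat.find_min' hP ⟨Y', hY', rfl⟩
  · intro q hq
    obtain ⟨p, hp, rfl⟩ := mem_image.1 hq
    obtain ⟨-, j, hpR⟩ := mem_filter.1 hp
    exact shift_mem_Pstar hint hpR
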